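/- Let g > 0, a ≠ 0 and b > 0 satisfy b·tanh(b) > 1 and |a| < √(1 − (b·tanh(b))⁻¹). Define H(λ) = g⁻¹ and ũ(λ) = a·tanh(b(2λ − 1)) for λ ∈ (0,1). Then there exists ν > 0 such that ∫₀¹ g H(λ)/(iν − ũ(λ))² dλ = 1; consequently the operator A₀ associated to (H, ũ) has at least two complex-conjugate eigenvalues c = ±iν with Re c = 0 and Im c ≠ 0. -/

import Mathlib

open MeasureTheory Real Filter

/-- Lebesgue measure restricted to the interval `I = (0,1)`. -/
noncomputable def μ01 : Measure ℝ := volume.restrict (Set.Ioo 0 1)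

lemma tanh_lt_one' (y : ℝ) : Real.tanh y < 1 := by
  rw [Real.tanh_eq_sinh_div_cosh, div_lt_one (Real.cosh_pos y)]
  nlinarith [Real.cosh_sub_sinh y, Real.exp_pos (-y)]

lemma neg_one_lt_tanh' (y : ℝ) : -1 < Real.tanh y := by
  rw [Real.tanh_eq_sinh_div_cosh, lt_div_iff₀ (Real.cosh_pos y)]
  nlinarith [Real.cosh_add_sinh y, Real.exp_pos y]

lemma hasDerivAt_tanh' (y : ℝ) : HasDerivAt Real.tanh (1 - Real.tanh y ^ 2) y := by
  have h := (Real.hasDerivAt_sinh y).div (Real.hasDerivAt_cosh y) (Real.cosh_pos y).ne'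
  have he : ∀ z, Real.tanh z = Real.sinh z / Real.cosh z := fun z => Real.tanh_eq_sinh_div_cosh z
  replace h := h.congr_of_eventuallyEq (Filter.Eventually.of_forall he)
  refine h.congr_deriv ?_
  rw [he]
  have hc := (Real.cosh_pos y).ne'
  field_simp

lemma continuous_tanh' : Continuous Real.tanh := by
  have he : ∀ z, Real.tanh z = Real.sinh z / Real.cosh z := fun z => Real.tanh_eq_sinh_div_cosh z
  simp only [funext he]
  exact Real.continuous_sinh.div Real.continuous_cosh fun x => (Real.cosh_pos x).ne'

lemma log_tanh_id (b : ℝ) : Real.log (1 + Real.tanh b) - Real.log (1 - Real.tanh b) = 2 * b := by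
  have hc := (Real.cosh_pos b).ne'
  have h1 : 1 + Real.tanh b = Real.exp b / Real.cosh b := by
    rw [Real.tanh_eq_sinh_div_cosh]; field_simp; exact Real.cosh_add_sinh b
  have h2 : 1 - Real.tanh b = Real.exp (-b) / Real.cosh b := by
    rw [Real.tanh_eq_sinh_div_cosh]; field_simp; exact Real.cosh_sub_sinh b
  rw [h1, h2, Real.log_div (Real.exp_ne_zero _) hc, Real.log_div (Real.exp_ne_zero _) hc,
    Real.log_exp, Real.log_exp]
  ring

noncomputable def sf (b x : ℝ) : ℝ := Real.tanh (b * (2 * x - 1))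

lemma hasDerivAt_sf (b x : ℝ) : HasDerivAt (sf b) (2 * b * (1 - sf b x ^ 2)) x := by
  have hi : HasDerivAt (fun x : ℝ => b * (2 * x - 1)) (b * 2) x := by
    simpa using (((hasDerivAt_id x).const_mul 2).sub_const 1).const_mul b
  have := (hasDerivAt_tanh' (b * (2 * x - 1))).comp x hi
  have e : 2 * b * (1 - sf b x ^ 2) = (1 - Real.tanh (b*(2*x-1)) ^ 2) * (b * 2) := by
    rw [sf]; ring
  rw [e]; exact this

noncomputable def gRe (a b ν x : ℝ) : ℝ :=
  (a^2 - ν^2) / (4*b*(a^2+ν^2)^2) * (Real.log (1 + sf b x) - Real.log (1 - sf b x))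
  - a*ν/(b*(a^2+ν^2)^2) * Real.arctan (a * sf b x / ν)
  - a^2/(2*b*(a^2+ν^2)) * (sf b x / (a^2*(sf b x)^2 + ν^2))

noncomputable def gIm (a b ν x : ℝ) : ℝ :=
  a*ν/(2*b*(a^2+ν^2)^2) * (Real.log (a^2*(sf b x)^2 + ν^2) - Real.log (1 - (sf b x)^2))
  - a*ν/(2*b*(a^2+ν^2)) * (a^2*(sf b x)^2 + ν^2)⁻¹

lemma hasDerivAt_gRe (a b ν : ℝ) (ha : a ≠ 0) (hb : 0 < b) (hν : ν ≠ 0) (x : ℝ) :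
    HasDerivAt (gRe a b ν)
      ((a^2*(sf b x)^2 - ν^2) / ((a^2*(sf b x)^2 + ν^2)^2)) x := by
  have htl := tanh_lt_one' (b*(2*x-1))
  have htg := neg_one_lt_tanh' (b*(2*x-1))
  rw [show Real.tanh (b*(2*x-1)) = sf b x from rfl] at htl htg
  have h1 : (0:ℝ) < 1 + sf b x := by linarith
  have h2 : (0:ℝ) < 1 - sf b x := by linarith
  have hden : (0:ℝ) < a^2*(sf b x)^2 + ν^2 := by positivity
  have hN : (0:ℝ) < a^2+ν^2 := by positivity
  have hp : (0:ℝ) < 1 + (a * sf b x / ν)^2 := by positivity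
  have hd := hasDerivAt_sf b x
  have hl1 := (hd.const_add 1).log h1.ne'
  have hl2 := (hd.const_sub 1).log h2.ne'
  have hat := ((hd.const_mul a).div_const ν).arctan
  have hden' := (((hd.pow 2).const_mul (a^2)).add_const (ν^2))
  have hq := hd.div hden' hden.ne'
  have total := (((hl1.sub hl2).const_mul ((a^2 - ν^2) / (4*b*(a^2+ν^2)^2))).sub
      (hat.const_mul (a*ν/(b*(a^2+ν^2)^2)))).sub
      (hq.const_mul (a^2/(2*b*(a^2+ν^2))))
  refine total.congr_deriv ?_
  simp only [Pi.pow_apply, Nat.cast_ofNat, show (2:ℕ) - 1 = 1 from rfl, pow_one]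
  field_simp
  ring

lemma hasDerivAt_gIm (a b ν : ℝ) (ha : a ≠ 0) (hb : 0 < b) (hν : ν ≠ 0) (x : ℝ) :
    HasDerivAt (gIm a b ν)
      (2*ν*a*(sf b x) / ((a^2*(sf b x)^2 + ν^2)^2)) x := by
  have htl := tanh_lt_one' (b*(2*x-1))
  have htg := neg_one_lt_tanh' (b*(2*x-1))
  rw [show Real.tanh (b*(2*x-1)) = sf b x from rfl] at htl htg
  have h2 : (0:ℝ) < 1 - (sf b x)^2 := by nlinarith
  have hden : (0:ℝ) < a^2*(sf b x)^2 + ν^2 := by positivity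
  have hN : (0:ℝ) < a^2+ν^2 := by positivity
  have hd := hasDerivAt_sf b x
  have hl5 := (((hd.pow 2).const_mul (a^2)).add_const (ν^2)).log hden.ne'
  have hl6 := ((hd.pow 2).const_sub 1).log h2.ne'
  have hq7 := (((hd.pow 2).const_mul (a^2)).add_const (ν^2)).inv hden.ne'
  have total := ((hl5.sub hl6).const_mul (a*ν/(2*b*(a^2+ν^2)^2))).sub
      (hq7.const_mul (a*ν/(2*b*(a^2+ν^2))))
  refine total.congr_deriv ?_
  simp only [Pi.pow_apply, Nat.cast_ofNat, show (2:ℕ) - 1 = 1 from rfl, pow_one]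
  field_simp
  ring

lemma hasDerivAt_G (a b ν : ℝ) (ha : a ≠ 0) (hb : 0 < b) (hν : 0 < ν) (x : ℝ) :
    HasDerivAt (fun y => ((gRe a b ν y : ℂ) + (gIm a b ν y : ℂ) * Complex.I))
      (((Complex.I * (ν:ℂ) - ((a * Real.tanh (b*(2*x-1)) : ℝ) : ℂ))^2)⁻¹) x := by
  have hRe := (hasDerivAt_gRe a b ν ha hb hν.ne' x).ofReal_comp
  have hIm := (hasDerivAt_gIm a b ν ha hb hν.ne' x).ofReal_comp.mul_const Complex.I
  have hG := hRe.add hIm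
  refine hG.congr_deriv ?_
  set S := sf b x with hS
  have hden : (0:ℝ) < a^2*S^2 + ν^2 := by positivity
  have hsq : (Complex.I * (ν:ℂ) - ((a * S : ℝ) : ℂ))^2
      = ((a^2*S^2 - ν^2 : ℝ) : ℂ) - ((2*ν*a*S : ℝ) : ℂ) * Complex.I := by
    push_cast
    linear_combination (ν:ℂ)^2 * Complex.I_sq
  have h1 : (a^2*S^2 - ν^2) * ((a^2*S^2 - ν^2) / ((a^2*S^2 + ν^2)^2))
      + (2*ν*a*S) * (2*ν*a*S / ((a^2*S^2 + ν^2)^2)) = 1 := by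
    field_simp
    ring
  have h2 : (a^2*S^2 - ν^2) * (2*ν*a*S / ((a^2*S^2 + ν^2)^2))
      - (2*ν*a*S) * ((a^2*S^2 - ν^2) / ((a^2*S^2 + ν^2)^2)) = 0 := by ring
  have h1c := congrArg (Complex.ofReal) h1
  have h2c := congrArg (Complex.ofReal) h2
  push_cast at h1c h2c
  have key : (Complex.I * (ν:ℂ) - ((a * S : ℝ) : ℂ))^2 *
      ((((a^2*S^2 - ν^2) / ((a^2*S^2 + ν^2)^2) : ℝ) : ℂ)
        + ((2*ν*a*S / ((a^2*S^2 + ν^2)^2) : ℝ) : ℂ) * Complex.I) = 1 := by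
    rw [hsq]
    push_cast
    linear_combination h1c + h2c * Complex.I
      - ((2*(ν:ℂ)*a*S) * (2*(ν:ℂ)*a*S / (((a:ℂ)^2*S^2 + (ν:ℂ)^2)^2))) * Complex.I_sq
  exact (inv_eq_of_mul_eq_one_right key).symm

lemma key_integral (a b ν : ℝ) (ha : a ≠ 0) (hb : 0 < b) (hν : 0 < ν)
    (hfv : (a^2 - ν^2)/((a^2+ν^2)^2)
       - 2*a*ν/(b*(a^2+ν^2)^2) * Real.arctan (a * Real.tanh b / ν)
       - a^2*Real.tanh b/(b*(a^2+ν^2)*(a^2*(Real.tanh b)^2+ν^2)) = 1) :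
    ∫ x, ((Complex.I * (ν:ℂ) - ((a * Real.tanh (b*(2*x-1)) : ℝ) : ℂ))^2)⁻¹ ∂μ01 = 1 := by
  -- continuity/integrability of the integrand
  have hne : ∀ x : ℝ, (Complex.I * (ν:ℂ) - ((a * Real.tanh (b*(2*x-1)) : ℝ) : ℂ)) ≠ 0 := by
    intro x h
    have := congrArg Complex.im h
    simp only [Complex.sub_im, Complex.mul_im, Complex.I_re, Complex.I_im, Complex.ofReal_re,
      Complex.ofReal_im, Complex.zero_im] at this
    norm_num at this
    exact hν.ne' this
  have hcont : Continuous fun x : ℝ =>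
      ((Complex.I * (ν:ℂ) - ((a * Real.tanh (b*(2*x-1)) : ℝ) : ℂ))^2)⁻¹ := by
    apply Continuous.inv₀
    · apply Continuous.pow
      apply continuous_const.sub
      apply Complex.continuous_ofReal.comp
      apply continuous_const.mul
      have : Continuous Real.tanh := by
        have he : ∀ z, Real.tanh z = Real.sinh z / Real.cosh z :=
          fun z => Real.tanh_eq_sinh_div_cosh z
        simp only [funext he]
        exact Real.continuous_sinh.div Real.continuous_cosh fun x => (Real.cosh_pos x).ne'
      exact this.comp (by continuity)
    · exact fun x => pow_ne_zero _ (hne x)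
  have hFTC := intervalIntegral.integral_eq_sub_of_hasDerivAt
    (f := fun y => ((gRe a b ν y : ℂ) + (gIm a b ν y : ℂ) * Complex.I))
    (f' := fun x => ((Complex.I * (ν:ℂ) - ((a * Real.tanh (b*(2*x-1)) : ℝ) : ℂ))^2)⁻¹)
    (a := 0) (b := 1)
    (fun x _ => hasDerivAt_G a b ν ha hb hν x)
    (hcont.intervalIntegrable 0 1)
  have hμ : (∫ x, ((Complex.I * (ν:ℂ) - ((a * Real.tanh (b*(2*x-1)) : ℝ) : ℂ))^2)⁻¹ ∂μ01)
      = ∫ x in (0:ℝ)..1, ((Complex.I * (ν:ℂ) - ((a * Real.tanh (b*(2*x-1)) : ℝ) : ℂ))^2)⁻¹ := by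
    rw [show μ01 = volume.restrict (Set.Ioo 0 1) from rfl,
      intervalIntegral.integral_of_le (by norm_num : (0:ℝ) ≤ 1),
      integral_Ioc_eq_integral_Ioo]
  rw [hμ, hFTC]
  -- endpoint values
  have hs1 : sf b 1 = Real.tanh b := by rw [sf]; norm_num
  have hs0 : sf b 0 = -Real.tanh b := by
    have : b * (2*(0:ℝ) - 1) = -b := by ring
    rw [sf, this, Real.tanh_neg]
  have hIm01 : gIm a b ν 1 = gIm a b ν 0 := by
    rw [gIm, gIm, hs1, hs0]; ring_nf
  have hRe01 : gRe a b ν 1 - gRe a b ν 0 = 1 := by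
    rw [gRe, gRe, hs1, hs0]
    rw [show a * -Real.tanh b / ν = -(a * Real.tanh b / ν) by ring, Real.arctan_neg]
    rw [show (1 + -Real.tanh b) = 1 - Real.tanh b by ring,
        show (1 - -Real.tanh b) = 1 + Real.tanh b by ring]
    have hlog : Real.log (1 + Real.tanh b) = 2*b + Real.log (1 - Real.tanh b) := by
      linarith [log_tanh_id b]
    have hN : (0:ℝ) < a^2+ν^2 := by positivity
    have hd2 : (0:ℝ) < a^2*(Real.tanh b)^2+ν^2 := by positivity
    rw [hlog, ← hfv]
    field_simp
    ring
  calc ((gRe a b ν 1 : ℂ) + (gIm a b ν 1 : ℂ) * Complex.I)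
      - ((gRe a b ν 0 : ℂ) + (gIm a b ν 0 : ℂ) * Complex.I)
      = ((gRe a b ν 1 - gRe a b ν 0 : ℝ) : ℂ) := by rw [hIm01]; push_cast; ring
    _ = 1 := by rw [hRe01]; norm_num

lemma exists_nu (a b : ℝ) (ha : a ≠ 0) (hb : 0 < b) (hb1 : 1 < b * Real.tanh b)
    (ha1 : |a| < Real.sqrt (1 - (b * Real.tanh b)⁻¹)) :
    ∃ ν : ℝ, 0 < ν ∧
      (a^2 - ν^2)/((a^2+ν^2)^2)
       - 2*a*ν/(b*(a^2+ν^2)^2) * Real.arctan (a * Real.tanh b / ν)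
       - a^2*Real.tanh b/(b*(a^2+ν^2)*(a^2*(Real.tanh b)^2+ν^2)) = 1 := by
  set T := Real.tanh b with hTdef
  have hT : 0 < T := by
    have hs : 0 < Real.sinh b := Real.sinh_pos_iff.mpr hb
    have hc : 0 < Real.cosh b := Real.cosh_pos b
    rw [hTdef, Real.tanh_eq_sinh_div_cosh]; positivity
  have hT1 : T < 1 := tanh_lt_one' b
  have ha2 : a^2 < 1 - (b*T)⁻¹ := by
    have hinv : (b*T)⁻¹ < 1 := by
      rw [inv_lt_one_iff₀]; right; exact hb1
    have h0 : (0:ℝ) ≤ 1 - (b*T)⁻¹ := by linarith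
    nlinarith [Real.sq_sqrt h0, sq_abs a, abs_nonneg a, Real.sqrt_nonneg (1 - (b*T)⁻¹)]
  set f : ℝ → ℝ := fun ν => (a^2 - ν^2)/((a^2+ν^2)^2)
       - 2*a*ν/(b*(a^2+ν^2)^2) * Real.arctan (a * T / ν)
       - a^2*T/(b*(a^2+ν^2)*(a^2*T^2+ν^2)) with hfdef
  have ha4 : (0:ℝ) < a^2 := by positivity
  -- limit at 0+
  set L₀ : ℝ := (1 - (b*T)⁻¹)/a^2 with hL₀def
  have hL : 1 < L₀ := (one_lt_div ha4).mpr ha2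
  have htends : Tendsto f (nhdsWithin 0 (Set.Ioi 0)) (nhds L₀) := by
    have hsplit : f = fun ν => ((a^2 - ν^2)/((a^2+ν^2)^2)
        - a^2*T/(b*(a^2+ν^2)*(a^2*T^2+ν^2)))
        - (2*a*ν/(b*(a^2+ν^2)^2) * Real.arctan (a * T / ν)) := by
      funext ν; rw [hfdef]; ring
    rw [hsplit]
    have h1 : Tendsto (fun ν : ℝ => (a^2 - ν^2)/((a^2+ν^2)^2)
        - a^2*T/(b*(a^2+ν^2)*(a^2*T^2+ν^2))) (nhdsWithin 0 (Set.Ioi 0)) (nhds L₀) := by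
      have hca : ContinuousAt (fun ν : ℝ => (a^2 - ν^2)/((a^2+ν^2)^2)
          - a^2*T/(b*(a^2+ν^2)*(a^2*T^2+ν^2))) 0 := by
        apply ContinuousAt.sub
        · exact ContinuousAt.div (by fun_prop) (by fun_prop) (by positivity)
        · exact ContinuousAt.div (by fun_prop) (by fun_prop) (by positivity)
      have h := hca.continuousWithinAt (s := Set.Ioi (0:ℝ))
      have hval : (a^2 - 0^2)/((a^2+0^2)^2) - a^2*T/(b*(a^2+0^2)*(a^2*T^2+0^2)) = L₀ := by
        rw [hL₀def]
        field_simp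
        ring
      rw [ContinuousWithinAt] at h
      rwa [hval] at h
    have h2 : Tendsto (fun ν : ℝ => 2*a*ν/(b*(a^2+ν^2)^2) * Real.arctan (a * T / ν))
        (nhdsWithin 0 (Set.Ioi 0)) (nhds 0) := by
      have hbound : ∀ ν : ℝ, ‖2*a*ν/(b*(a^2+ν^2)^2) * Real.arctan (a * T / ν)‖
          ≤ |a| * π / (b * a^4) * |ν| := by
        intro ν
        have hN : (0:ℝ) < a^2+ν^2 := by positivity
        have harc : |Real.arctan (a*T/ν)| ≤ π/2 :=
          abs_le.mpr ⟨(Real.neg_pi_div_two_lt_arctan _).le, (Real.arctan_lt_pi_div_two _).le⟩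
        have h4' : a^4 ≤ (a^2+ν^2)^2 := by nlinarith [sq_nonneg ν, sq_nonneg (a*ν)]
        have h4 : b * a^4 ≤ b * (a^2+ν^2)^2 := mul_le_mul_of_nonneg_left h4' hb.le
        have hb1' : |2*a*ν/(b*(a^2+ν^2)^2)| ≤ 2 * |a| * |ν| / (b * a^4) := by
          rw [abs_div, abs_of_pos (show (0:ℝ) < b*(a^2+ν^2)^2 by positivity)]
          apply div_le_div₀ (by positivity) _ (by positivity) h4
          rw [abs_mul, abs_mul, abs_two]
        rw [Real.norm_eq_abs, abs_mul]
        calc |2*a*ν/(b*(a^2+ν^2)^2)| * |Real.arctan (a*T/ν)|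
            ≤ (2 * |a| * |ν| / (b * a^4)) * (π/2) :=
              mul_le_mul hb1' harc (abs_nonneg _) (by positivity)
          _ = |a| * π / (b * a^4) * |ν| := by ring
      have htg : Tendsto (fun ν : ℝ => |a| * π / (b * a^4) * |ν|)
          (nhdsWithin 0 (Set.Ioi 0)) (nhds 0) := by
        have hc : Continuous (fun ν : ℝ => |a| * π / (b * a^4) * |ν|) :=
          continuous_const.mul continuous_abs
        have h := (hc.tendsto 0).mono_left (nhdsWithin_le_nhds (s := Set.Ioi (0:ℝ)))
        simpa using h
      exact squeeze_zero_norm hbound htg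
    have h3 := h1.sub h2
    rw [sub_zero] at h3
    exact h3
  -- get small ν₀ with f ν₀ > 1
  have hev : ∀ᶠ ν in nhdsWithin (0:ℝ) (Set.Ioi 0), 1 < f ν :=
    htends.eventually (eventually_gt_nhds hL)
  have hmem : Set.Ioo (0:ℝ) (|a|+1) ∈ nhdsWithin (0:ℝ) (Set.Ioi 0) :=
    Ioo_mem_nhdsGT_of_mem ⟨le_refl 0, by positivity⟩
  obtain ⟨ν₀, hν₀1, hν₀2⟩ := (hev.and (eventually_of_mem hmem (fun x hx => hx))).exists
  set ν₁ : ℝ := |a| + 1 with hν₁def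
  have hν₁pos : 0 < ν₁ := by positivity
  -- f ν₁ < 1
  have hfν₁ : f ν₁ < 1 := by
    have hN : (0:ℝ) < a^2+ν₁^2 := by positivity
    have ht1 : (a^2 - ν₁^2)/((a^2+ν₁^2)^2) ≤ 0 := by
      apply div_nonpos_of_nonpos_of_nonneg
      · nlinarith [sq_abs a, abs_nonneg a]
      · positivity
    have ht2 : 0 ≤ 2*a*ν₁/(b*(a^2+ν₁^2)^2) * Real.arctan (a * T / ν₁) := by
      have key : 0 ≤ a * Real.arctan (a*T/ν₁) := by
        rcases le_or_gt 0 a with h | h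
        · apply mul_nonneg h
          rw [← Real.arctan_zero]
          exact Real.arctan_strictMono.monotone (by positivity)
        · have harg : a * T / ν₁ ≤ 0 := by
            apply div_nonpos_of_nonpos_of_nonneg _ hν₁pos.le
            exact mul_nonpos_of_nonpos_of_nonneg h.le hT.le
          have harcle : Real.arctan (a*T/ν₁) ≤ 0 := by
            rw [← Real.arctan_zero]
            exact Real.arctan_strictMono.monotone harg
          nlinarith
      have : 2*a*ν₁/(b*(a^2+ν₁^2)^2) * Real.arctan (a * T / ν₁)
          = (2*ν₁/(b*(a^2+ν₁^2)^2)) * (a * Real.arctan (a*T/ν₁)) := by ring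
      rw [this]
      apply mul_nonneg (by positivity) key
    have ht3 : 0 < a^2*T/(b*(a^2+ν₁^2)*(a^2*T^2+ν₁^2)) := by positivity
    simp only [hfdef]
    linarith
  -- continuity on [ν₀, ν₁]
  have hcont : ContinuousOn f (Set.Icc ν₀ ν₁) := by
    intro ν hν
    have hνpos : 0 < ν := lt_of_lt_of_le hν₀2.1 hν.1
    apply ContinuousAt.continuousWithinAt
    rw [hfdef]
    apply ContinuousAt.sub
    apply ContinuousAt.sub
    · exact ContinuousAt.div (by fun_prop) (by fun_prop) (by positivity)
    · apply ContinuousAt.mul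
      · exact ContinuousAt.div (by fun_prop) (by fun_prop) (by positivity)
      · exact Real.continuous_arctan.continuousAt.comp
          (ContinuousAt.div continuousAt_const continuousAt_id hνpos.ne')
    · exact ContinuousAt.div (by fun_prop) (by fun_prop) (by positivity)
  have hivt := intermediate_value_Icc' hν₀2.2.le hcont
  obtain ⟨ν, hνmem, hfν⟩ := hivt ⟨hfν₁.le, hν₀1.le⟩
  simp only [hfdef] at hfν
  exact ⟨ν, lt_of_lt_of_le hν₀2.1 hνmem.1, hfν⟩

instance : IsFiniteMeasure μ01 := by
  constructor
  rw [show μ01 = volume.restrict (Set.Ioo 0 1) from rfl, Measure.restrict_apply_univ,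
    Real.volume_Ioo]
  norm_num

lemma continuous_uC (a b : ℝ) :
    Continuous (fun x : ℝ => ((a * Real.tanh (b * (2 * x - 1)) : ℝ) : ℂ)) := by
  apply Complex.continuous_ofReal.comp
  apply continuous_const.mul
  have he : ∀ z, Real.tanh z = Real.sinh z / Real.cosh z :=
    fun z => Real.tanh_eq_sinh_div_cosh z
  simp only [funext he]
  exact (Real.continuous_sinh.div Real.continuous_cosh
    fun x => (Real.cosh_pos x).ne').comp (by continuity)

lemma eigen_pair (g a b : ℝ) (hg : 0 < g) (c : ℂ) (hc : c.im ≠ 0)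
    (A : (Lp ℂ 2 μ01 × Lp ℂ 2 μ01) →L[ℂ] (Lp ℂ 2 μ01 × Lp ℂ 2 μ01))
    (hA : ∀ φ : Lp ℂ 2 μ01 × Lp ℂ 2 μ01,
      ((A φ).1 : ℝ → ℂ) =ᵐ[μ01]
        (fun x => ((a * Real.tanh (b * (2 * x - 1)) : ℝ) : ℂ) * (φ.1 : ℝ → ℂ) x +
          ((g⁻¹ : ℝ) : ℂ) * (φ.2 : ℝ → ℂ) x) ∧
      ((A φ).2 : ℝ → ℂ) =ᵐ[μ01]
        (fun x => (g : ℂ) * (∫ y, (φ.1 : ℝ → ℂ) y ∂μ01) +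
          ((a * Real.tanh (b * (2 * x - 1)) : ℝ) : ℂ) * (φ.2 : ℝ → ℂ) x))
    (hint : ∫ x, ((c - ((a * Real.tanh (b * (2 * x - 1)) : ℝ) : ℂ))^2)⁻¹ ∂μ01 = 1) :
    ∃ φ : Lp ℂ 2 μ01 × Lp ℂ 2 μ01, φ ≠ 0 ∧ A φ = c • φ := by
  set u : ℝ → ℂ := fun x => ((a * Real.tanh (b * (2 * x - 1)) : ℝ) : ℂ) with hu
  have himu : ∀ x, (c - u x).im = c.im := by
    intro x
    rw [Complex.sub_im]
    simp only [hu, Complex.ofReal_im]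
    ring
  have hune : ∀ x, c - u x ≠ 0 := by
    intro x h
    apply hc
    have h2 := congrArg Complex.im h
    rw [himu x, Complex.zero_im] at h2
    exact h2
  set w2 : ℝ → ℂ := fun x => (c - u x)⁻¹ with hw2
  set w1 : ℝ → ℂ := fun x => ((g⁻¹ : ℝ) : ℂ) * ((c - u x)⁻¹)^2 with hw1
  have hw2cont : Continuous w2 := (continuous_const.sub (continuous_uC a b)).inv₀ hune
  have hw1cont : Continuous w1 :=
    continuous_const.mul (((continuous_const.sub (continuous_uC a b)).inv₀ hune).pow 2)
  have hbnd : ∀ x, ‖c - u x‖ ≥ |c.im| := by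
    intro x
    calc ‖c - u x‖ ≥ |(c - u x).im| := Complex.abs_im_le_norm _
      _ = |c.im| := by rw [himu x]
  have him0 : (0:ℝ) < |c.im| := abs_pos.mpr hc
  have hmem2 : MemLp w2 2 μ01 := by
    apply MemLp.of_bound hw2cont.aestronglyMeasurable (|c.im|⁻¹)
    apply ae_of_all
    intro x
    rw [hw2]
    simp only [norm_inv]
    exact inv_anti₀ him0 (hbnd x)
  have hmem1 : MemLp w1 2 μ01 := by
    apply MemLp.of_bound hw1cont.aestronglyMeasurable (|g⁻¹| * (|c.im|⁻¹)^2)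
    apply ae_of_all
    intro x
    rw [hw1]
    rw [norm_mul, norm_pow, norm_inv, Complex.norm_real, Real.norm_eq_abs]
    apply mul_le_mul_of_nonneg_left _ (abs_nonneg _)
    exact pow_le_pow_left₀ (by positivity) (inv_anti₀ him0 (hbnd x)) 2
  set φ1 : Lp ℂ 2 μ01 := hmem1.toLp w1 with hφ1
  set φ2 : Lp ℂ 2 μ01 := hmem2.toLp w2 with hφ2
  have hco1 : (φ1 : ℝ → ℂ) =ᵐ[μ01] w1 := hmem1.coeFn_toLp
  have hco2 : (φ2 : ℝ → ℂ) =ᵐ[μ01] w2 := hmem2.coeFn_toLp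
  have hgg : (g : ℂ) * ((g⁻¹ : ℝ) : ℂ) = 1 := by
    rw [Complex.ofReal_inv]
    exact mul_inv_cancel₀ (by exact_mod_cast hg.ne')
  refine ⟨(φ1, φ2), ?_, ?_⟩
  · intro h0
    have h2 : φ2 = 0 := congrArg Prod.snd h0
    have hae : w2 =ᵐ[μ01] 0 := by
      have hh := hmem2.coeFn_toLp
      rw [← hφ2, h2] at hh
      exact hh.symm.trans (Lp.coeFn_zero ℂ 2 μ01)
    have hfalse : ∀ᵐ x ∂μ01, False := by
      filter_upwards [hae] with x hx
      exact inv_ne_zero (hune x) (by simpa [hw2] using hx)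
    rw [ae_iff] at hfalse
    have huniv : μ01 Set.univ = 0 := by simpa using hfalse
    rw [show μ01 = volume.restrict (Set.Ioo 0 1) from rfl, Measure.restrict_apply_univ,
      Real.volume_Ioo] at huniv
    norm_num at huniv
  · obtain ⟨hA1, hA2⟩ := hA (φ1, φ2)
    have hI1 : ∫ y, ((φ1 : Lp ℂ 2 μ01) : ℝ → ℂ) y ∂μ01 = ((g⁻¹ : ℝ) : ℂ) := by
      rw [integral_congr_ae hco1, hw1, integral_const_mul]
      simp only [inv_pow]
      rw [hint, mul_one]
    apply Prod.ext
    · show (A (φ1, φ2)).1 = c • φ1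
      apply Lp.ext
      have hsm : ((c • φ1 : Lp ℂ 2 μ01) : ℝ → ℂ) =ᵐ[μ01] fun x => c * w1 x := by
        filter_upwards [Lp.coeFn_smul c φ1, hco1] with x h1 h2
        rw [h1]
        simp [h2]
      refine hA1.trans (Filter.EventuallyEq.trans ?_ hsm.symm)
      filter_upwards [hco1, hco2] with x h1 h2
      rw [h1, h2, hw1, hw2]
      simp only
      have hne := hune x
      have hgne : (g:ℂ) ≠ 0 := by exact_mod_cast hg.ne'
      rw [show ((a * Real.tanh (b * (2 * x - 1)) : ℝ) : ℂ) = u x from rfl]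
      field_simp
      ring
    · show (A (φ1, φ2)).2 = c • φ2
      apply Lp.ext
      have hsm : ((c • φ2 : Lp ℂ 2 μ01) : ℝ → ℂ) =ᵐ[μ01] fun x => c * w2 x := by
        filter_upwards [Lp.coeFn_smul c φ2, hco2] with x h1 h2
        rw [h1]
        simp [h2]
      refine hA2.trans (Filter.EventuallyEq.trans ?_ hsm.symm)
      filter_upwards [hco2] with x h2
      rw [h2, hI1, hw2]
      simp only
      have hne := hune x
      have hgne : (g:ℂ) ≠ 0 := by exact_mod_cast hg.ne'
      rw [show ((a * Real.tanh (b * (2 * x - 1)) : ℝ) : ℂ) = u x from rfl]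
      rw [hgg]
      field_simp
      ring


/-- For `H = g⁻¹` and `ũ(λ) = a·tanh(b(2λ-1))` with `b·tanh b > 1` and
`0 < |a| < √(1 - (b·tanh b)⁻¹)`, there exists `ν > 0` with
`∫₀¹ gH/(iν - ũ)² dλ = 1`; consequently `A₀` has the two complex-conjugate eigenvalues
`±iν`, which have zero real part and nonzero imaginary part. -/
theorem stmt11 (g a b : ℝ) (hg : 0 < g) (ha : a ≠ 0) (hb : 0 < b)
    (hb1 : 1 < b * Real.tanh b)
    (ha1 : |a| < Real.sqrt (1 - (b * Real.tanh b)⁻¹))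
    (A : (Lp ℂ 2 μ01 × Lp ℂ 2 μ01) →L[ℂ] (Lp ℂ 2 μ01 × Lp ℂ 2 μ01))
    (hA : ∀ φ : Lp ℂ 2 μ01 × Lp ℂ 2 μ01,
      ((A φ).1 : ℝ → ℂ) =ᵐ[μ01]
        (fun x => ((a * Real.tanh (b * (2 * x - 1)) : ℝ) : ℂ) * (φ.1 : ℝ → ℂ) x +
          ((g⁻¹ : ℝ) : ℂ) * (φ.2 : ℝ → ℂ) x) ∧
      ((A φ).2 : ℝ → ℂ) =ᵐ[μ01]
        (fun x => (g : ℂ) * (∫ y, (φ.1 : ℝ → ℂ) y ∂μ01) +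
          ((a * Real.tanh (b * (2 * x - 1)) : ℝ) : ℂ) * (φ.2 : ℝ → ℂ) x)) :
    ∃ ν : ℝ, 0 < ν ∧
      (∫ x, (g : ℂ) * ((g⁻¹ : ℝ) : ℂ) /
        (Complex.I * (ν : ℂ) - ((a * Real.tanh (b * (2 * x - 1)) : ℝ) : ℂ)) ^ 2 ∂μ01 = 1) ∧
      (∃ φ : Lp ℂ 2 μ01 × Lp ℂ 2 μ01, φ ≠ 0 ∧ A φ = (Complex.I * (ν : ℂ)) • φ) ∧
      (∃ ψ : Lp ℂ 2 μ01 × Lp ℂ 2 μ01, ψ ≠ 0 ∧ A ψ = (-(Complex.I * (ν : ℂ))) • ψ) := by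
  obtain ⟨ν, hν, hfv⟩ := exists_nu a b ha hb hb1 ha1
  have hint := key_integral a b ν ha hb hν hfv
  have hgg : (g : ℂ) * ((g⁻¹ : ℝ) : ℂ) = 1 := by
    rw [Complex.ofReal_inv]
    exact mul_inv_cancel₀ (by exact_mod_cast hg.ne')
  have hint2 : ∫ x, ((-(Complex.I * (ν:ℂ)) - ((a * Real.tanh (b*(2*x-1)) : ℝ) : ℂ))^2)⁻¹ ∂μ01
      = 1 := by
    have hconj : (fun x : ℝ =>
        ((-(Complex.I * (ν:ℂ)) - ((a * Real.tanh (b*(2*x-1)) : ℝ) : ℂ))^2)⁻¹)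
        = fun x : ℝ => (starRingEnd ℂ)
          (((Complex.I * (ν:ℂ) - ((a * Real.tanh (b*(2*x-1)) : ℝ) : ℂ))^2)⁻¹) := by
      funext x
      rw [map_inv₀, map_pow, map_sub, map_mul, Complex.conj_I, Complex.conj_ofReal,
        Complex.conj_ofReal]
      ring_nf
    rw [hconj, integral_conj, hint, map_one]
  refine ⟨ν, hν, ?_, ?_, ?_⟩
  · rw [show (∫ x, (g : ℂ) * ((g⁻¹ : ℝ) : ℂ) /
        (Complex.I * (ν : ℂ) - ((a * Real.tanh (b * (2 * x - 1)) : ℝ) : ℂ)) ^ 2 ∂μ01)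
        = ∫ x, ((Complex.I * (ν:ℂ) - ((a * Real.tanh (b*(2*x-1)) : ℝ) : ℂ))^2)⁻¹ ∂μ01 from by
      apply integral_congr_ae
      apply ae_of_all
      intro x
      simp only [hgg, one_div]]
    exact hint
  · exact eigen_pair g a b hg (Complex.I * (ν:ℂ))
      (by simp [Complex.mul_im]; exact hν.ne') A hA hint
  · exact eigen_pair g a b hg (-(Complex.I * (ν:ℂ)))
      (by simp [Complex.mul_im]; exact hν.ne') A hA hint2
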